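/- arXiv:2304.11958 — 4 statements merged into one kernel-verified Lean document; each statement's English description precedes it below -/
import Mathlib

section
/- If X is a real random variable with E[exp(|X|/c)] ≤ 2 for some c > 0, then for every real p ≥ 1, E[|X|^p] ≤ 2·p·(c·p)^p. -/
open MeasureTheory

lemma pow_le_pow_mul_exp {t p : ℝ} (ht : 0 ≤ t) (hp : 1 ≤ p) :
    t ^ p ≤ p ^ p * Real.exp t := by
  have hp0 : 0 < p := lt_of_lt_of_le one_pos hp
  rcases eq_or_lt_of_le ht with h0 | h0
  · rw [← h0, Real.zero_rpow (ne_of_gt hp0)]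
    positivity
  · have hlog : Real.log t ≤ t / p + Real.log p := by
      have := Real.log_le_sub_one_of_pos (show 0 < t / p by positivity)
      have hlq : Real.log (t / p) = Real.log t - Real.log p :=
        Real.log_div (ne_of_gt h0) (ne_of_gt hp0)
      rw [hlq] at this
      linarith
    have h1 : p * Real.log t ≤ t + p * Real.log p := by
      have := mul_le_mul_of_nonneg_left hlog (le_of_lt hp0)
      have : p * Real.log t ≤ p * (t / p) + p * Real.log p := by linarith [this]
      rwa [mul_div_cancel₀ t (ne_of_gt hp0)] at this
    calc t ^ p = Real.exp (Real.log t * p) := Real.rpow_def_of_pos h0 p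
      _ ≤ Real.exp (t + Real.log p * p) := Real.exp_le_exp.mpr (by nlinarith)
      _ = p ^ p * Real.exp t := by
          rw [Real.exp_add, ← Real.rpow_def_of_pos hp0, mul_comm]

/-- If `E[exp(|X|/c)] ≤ 2` for some `c > 0`, then for every real `p ≥ 1`,
`E[|X|^p] ≤ 2·p·(c·p)^p`. -/
theorem psi1_moment_bound {Ω : Type*} [MeasurableSpace Ω] (μ : Measure Ω)
    [IsProbabilityMeasure μ] (X : Ω → ℝ) (c : ℝ) (hc : 0 < c)
    (hInt : Integrable (fun ω => Real.exp (|X ω| / c)) μ)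
    (hψ : ∫ ω, Real.exp (|X ω| / c) ∂μ ≤ 2)
    (p : ℝ) (hp : 1 ≤ p)
    (hmom : Integrable (fun ω => |X ω| ^ p) μ) :
    ∫ ω, |X ω| ^ p ∂μ ≤ 2 * p * (c * p) ^ p := by
  have hp0 : 0 < p := lt_of_lt_of_le one_pos hp
  have hcp : 0 < c * p := by positivity
  have hpt : ∀ ω, |X ω| ^ p ≤ (c * p) ^ p * Real.exp (|X ω| / c) := by
    intro ω
    have ht : 0 ≤ |X ω| / c := by positivity
    have := pow_le_pow_mul_exp ht hp
    have key : (|X ω| / c) ^ p ≤ p ^ p * Real.exp (|X ω| / c) := this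
    have : |X ω| ^ p = c ^ p * (|X ω| / c) ^ p := by
      rw [← Real.mul_rpow (le_of_lt hc) (by positivity)]
      rw [mul_div_cancel₀ _ (ne_of_gt hc)]
    rw [this, Real.mul_rpow (le_of_lt hc) (le_of_lt hp0), mul_assoc]
    exact mul_le_mul_of_nonneg_left key (by positivity)
  calc ∫ ω, |X ω| ^ p ∂μ ≤ ∫ ω, (c * p) ^ p * Real.exp (|X ω| / c) ∂μ :=
        integral_mono hmom (hInt.const_mul _) hpt
    _ = (c * p) ^ p * ∫ ω, Real.exp (|X ω| / c) ∂μ := integral_const_mul _ _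
    _ ≤ (c * p) ^ p * 2 := mul_le_mul_of_nonneg_left hψ (by positivity)
    _ ≤ 2 * p * (c * p) ^ p := by nlinarith [Real.rpow_pos_of_pos hcp p]
end

section
/- Let s ≤ d with d/s ≥ 3, r₂ > 0, and r₁ = 3√s·r₂. Then the set K = r₁·B₁^d ∩ r₂·B₂^d (intersection of the ℓ₁-ball of radius r₁ and ℓ₂-ball of radius r₂ in ℝ^d) is contained in 2·conv((r₁/r₂)²·B₀^d ∩ r₂·B₂^d), twice the convex hull of the set of vectors with at most (r₁/r₂)² = 9s nonzero entries and ℓ₂-norm at most r₂. -/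
open Pointwise

/-- Plan–Vershynin (2013), Lemma 3.1: with `r₁ = 3√s·r₂`, the intersection of the
`ℓ₁`-ball of radius `r₁` and the `ℓ₂`-ball of radius `r₂` in `ℝ^d` is contained in
twice the convex hull of the set of `(r₁/r₂)²`-sparse vectors of `ℓ₂`-norm at most `r₂`. -/
theorem ell1_ell2_ball_subset_convexHull_sparse (d s : ℕ) (hs : 1 ≤ s) (hsd : s ≤ d)
    (hds : 3 ≤ (d : ℝ) / s) (r₁ r₂ : ℝ) (hr₂ : 0 < r₂)
    (hr₁ : r₁ = 3 * Real.sqrt s * r₂) :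
    {v : EuclideanSpace ℝ (Fin d) | (∑ i, |v i|) ≤ r₁ ∧ ‖v‖ ≤ r₂} ⊆
      (2 : ℝ) • convexHull ℝ
        {v : EuclideanSpace ℝ (Fin d) |
          ((Function.support v).ncard : ℝ) ≤ (r₁ / r₂) ^ 2 ∧ ‖v‖ ≤ r₂} := by
  intro v hv
  obtain ⟨hv1, hv2⟩ := hv
  have hd1 : 1 ≤ d := le_trans hs hsd
  have hs0 : (0:ℝ) < (s:ℝ) := by exact_mod_cast hs
  have hss : (0:ℝ) < Real.sqrt s := Real.sqrt_pos.mpr hs0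
  set k : ℕ := 9 * s with hk
  have hk0 : 0 < k := by omega
  have hsqrt : Real.sqrt (k:ℝ) = 3 * Real.sqrt s := by
    rw [hk]; push_cast
    rw [show ((9:ℝ) * s) = 3^2 * s by ring, Real.sqrt_mul (by positivity),
      Real.sqrt_sq (by norm_num)]
  have hkr : ((k:ℕ) : ℝ) = (r₁ / r₂)^2 := by
    have hql : r₁ / r₂ = 3 * Real.sqrt s := by rw [hr₁]; field_simp
    rw [hql, mul_pow, Real.sq_sqrt hs0.le, hk]; push_cast; ring
  -- sorting permutation: |v (σ j)| is antitone in j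
  set σ : Equiv.Perm (Fin d) := Tuple.sort (fun i => -|v i|) with hσ
  have hmono : ∀ j j' : Fin d, j ≤ j' → |v (σ j')| ≤ |v (σ j)| := by
    intro j j' h
    have := Tuple.monotone_sort (fun i => -|v i|) h
    simpa using this
  -- blocks
  set T : ℕ → Finset (Fin d) := fun m =>
    Finset.univ.filter (fun i => m * k ≤ (σ.symm i : ℕ) ∧ (σ.symm i : ℕ) < m * k + k) with hT
  have hmemT : ∀ m (i : Fin d),
      i ∈ T m ↔ (m * k ≤ (σ.symm i : ℕ) ∧ (σ.symm i : ℕ) < m * k + k) := by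
    intro m i; simp [hT]
  set u : ℕ → EuclideanSpace ℝ (Fin d) := fun m => WithLp.toLp 2 (fun i => if i ∈ T m then v i else 0) with hu
  -- each coordinate lies in exactly one block among 0..d-1
  have hite : ∀ (w : Fin d → ℝ) (i : Fin d),
      ∑ m ∈ Finset.range d, (if i ∈ T m then w i else 0) = w i := by
    intro w i
    have hj : ((σ.symm i : ℕ)) < d := (σ.symm i).isLt
    rw [Finset.sum_eq_single ((σ.symm i : ℕ) / k)]
    · rw [if_pos]
      rw [hmemT]
      exact ⟨Nat.div_mul_le_self _ _, Nat.lt_div_mul_add hk0⟩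
    · intro m _ hne
      rw [if_neg]
      rw [hmemT]
      rintro ⟨h1, h2⟩
      exact hne (Nat.div_eq_of_lt_le h1 (by rw [add_mul]; omega)).symm
    · intro hni
      exact absurd (Finset.mem_range.mpr (lt_of_le_of_lt (Nat.div_le_self _ _) hj)) hni
  have hvsum : ∑ m ∈ Finset.range d, u m = v := by
    ext i
    rw [WithLp.ofLp_sum, Finset.sum_apply i (Finset.range d) (fun m => (u m).ofLp)]
    exact hite (fun i => v i) i
  -- cardinality bound on blocks
  have hcardT : ∀ m, (T m).card ≤ k := by
    intro m
    have hinj : Set.InjOn (fun i : Fin d => (σ.symm i : ℕ)) ↑(T m) := by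
      intro a _ b _ h
      exact σ.symm.injective (Fin.val_injective h)
    calc (T m).card = ((T m).image (fun i => (σ.symm i : ℕ))).card :=
          (Finset.card_image_of_injOn hinj).symm
      _ ≤ (Finset.Ico (m*k) (m*k+k)).card := by
          apply Finset.card_le_card
          intro x hx
          simp only [Finset.mem_image] at hx
          obtain ⟨i, hi, rfl⟩ := hx
          rw [hmemT] at hi
          simp [Finset.mem_Ico, hi.1, hi.2]
      _ = k := by rw [Nat.card_Ico]; omega
  -- ℓ¹ masses of blocks
  set L : ℕ → ℝ := fun m => ∑ i ∈ T m, |v i| with hL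
  have hL0 : ∀ m, 0 ≤ L m := fun m => Finset.sum_nonneg fun i _ => abs_nonneg _
  have hLsum : ∑ m ∈ Finset.range d, L m = ∑ i, |v i| := by
    have h1 : ∀ m, L m = ∑ i : Fin d, if i ∈ T m then |v i| else 0 := by
      intro m
      rw [Finset.sum_ite_mem, Finset.univ_inter]
    simp only [h1]
    rw [Finset.sum_comm]
    exact Finset.sum_congr rfl fun i _ => hite (fun i => |v i|) i
  -- key pointwise bound on later blocks
  have hcoord : ∀ n : ℕ, ∀ i ∈ T (n+1), (k:ℝ) * |v i| ≤ L n := by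
    intro n i hi
    rw [hmemT] at hi
    have hJlt : ∀ x ∈ Finset.Ico (n*k) (n*k+k), x < d := by
      intro x hx
      simp only [Finset.mem_Ico] at hx
      have : x < (n+1)*k := by rw [add_mul]; omega
      exact lt_of_lt_of_le (lt_of_lt_of_le this hi.1) (σ.symm i).isLt.le
    set J : Finset (Fin d) := (Finset.Ico (n*k) (n*k+k)).attachFin hJlt with hJ
    have hJcard : J.card = k := by
      rw [hJ, Finset.card_attachFin, Nat.card_Ico]; omega
    have hLJ : L n = ∑ j ∈ J, |v (σ j)| := by
      rw [hL]
      refine Finset.sum_nbij' (fun i => σ.symm i) (fun j => σ j) ?_ ?_ ?_ ?_ ?_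
      · intro a ha
        rw [hmemT] at ha
        rw [hJ, Finset.mem_attachFin, Finset.mem_Ico]
        exact ha
      · intro a ha
        rw [hJ, Finset.mem_attachFin, Finset.mem_Ico] at ha
        rw [hmemT]
        simpa using ha
      · intro a _; simp
      · intro a _; simp
      · intro a _; rw [Equiv.apply_symm_apply]
    have hbound : ∀ j ∈ J, |v i| ≤ |v (σ j)| := by
      intro j hj
      rw [hJ, Finset.mem_attachFin, Finset.mem_Ico] at hj
      have hle : j ≤ σ.symm i := by
        have : (j : ℕ) < (n+1)*k := by rw [add_mul]; omega
        exact Fin.le_def.mpr (le_of_lt (lt_of_lt_of_le this hi.1))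
      have := hmono j (σ.symm i) hle
      rwa [Equiv.apply_symm_apply] at this
    calc (k:ℝ) * |v i| = ∑ _j ∈ J, |v i| := by
          rw [Finset.sum_const, hJcard, nsmul_eq_mul]
      _ ≤ ∑ j ∈ J, |v (σ j)| := Finset.sum_le_sum hbound
      _ = L n := hLJ.symm
  -- norms of blocks
  have hnormu : ∀ m, ‖u m‖ = Real.sqrt (∑ i ∈ T m, (v i)^2) := by
    intro m
    rw [EuclideanSpace.norm_eq]
    congr 1
    rw [show (∑ i ∈ T m, (v i)^2) = ∑ i ∈ Finset.univ ∩ T m, (v i)^2 by rw [Finset.univ_inter],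
      ← Finset.sum_ite_mem Finset.univ (T m) (fun i => (v i)^2)]
    refine Finset.sum_congr rfl fun i _ => ?_
    rw [hu]
    by_cases h : i ∈ T m <;> simp [h, sq_abs]
  have hnorm0 : ‖u 0‖ ≤ r₂ := by
    refine le_trans ?_ hv2
    rw [hnormu, EuclideanSpace.norm_eq]
    apply Real.sqrt_le_sqrt
    calc ∑ i ∈ T 0, (v i)^2 ≤ ∑ i : Fin d, (v i)^2 :=
          Finset.sum_le_sum_of_subset_of_nonneg (Finset.subset_univ _)
            (fun i _ _ => sq_nonneg _)
      _ = ∑ i : Fin d, ‖v i‖^2 := by simp [sq_abs]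
  have hnormm : ∀ n : ℕ, ‖u (n+1)‖ ≤ L n / Real.sqrt (k:ℝ) := by
    intro n
    rw [hnormu]
    have h1 : ∑ i ∈ T (n+1), (v i)^2 ≤ (L n)^2 / (k:ℝ) := by
      have hk' : (0:ℝ) < (k:ℝ) := by exact_mod_cast hk0
      calc ∑ i ∈ T (n+1), (v i)^2 ≤ ∑ _i ∈ T (n+1), (L n / k)^2 := by
            refine Finset.sum_le_sum fun i hi => ?_
            rw [← sq_abs]
            have h2 := hcoord n i hi
            have h3 : |v i| ≤ L n / k := by
              rw [le_div_iff₀ hk']; linarith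
            exact pow_le_pow_left₀ (abs_nonneg _) h3 2
        _ = ((T (n+1)).card : ℝ) * (L n / k)^2 := by
            rw [Finset.sum_const, nsmul_eq_mul]
        _ ≤ (k:ℝ) * (L n / k)^2 := by
            apply mul_le_mul_of_nonneg_right _ (sq_nonneg _)
            exact_mod_cast hcardT (n+1)
        _ = (L n)^2 / (k:ℝ) := by field_simp
    calc Real.sqrt (∑ i ∈ T (n+1), (v i)^2) ≤ Real.sqrt ((L n)^2 / (k:ℝ)) :=
          Real.sqrt_le_sqrt h1
      _ = L n / Real.sqrt (k:ℝ) := by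
          rw [Real.sqrt_div' _ (by positivity), Real.sqrt_sq (hL0 n)]
  -- total mass bound
  have hsumnorm : ∑ m ∈ Finset.range d, ‖u m‖ ≤ 2 * r₂ := by
    have hsplit : ∑ m ∈ Finset.range d, ‖u m‖
        = ‖u 0‖ + ∑ n ∈ Finset.range (d-1), ‖u (n+1)‖ := by
      have := Finset.sum_range_succ' (fun m => ‖u m‖) (d-1)
      rw [show d - 1 + 1 = d by omega] at this
      rw [this, add_comm]
    rw [hsplit]
    have htail : ∑ n ∈ Finset.range (d-1), ‖u (n+1)‖ ≤ r₁ / Real.sqrt (k:ℝ) := by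
      calc ∑ n ∈ Finset.range (d-1), ‖u (n+1)‖
          ≤ ∑ n ∈ Finset.range (d-1), L n / Real.sqrt (k:ℝ) :=
            Finset.sum_le_sum fun n _ => hnormm n
        _ = (∑ n ∈ Finset.range (d-1), L n) / Real.sqrt (k:ℝ) := by
            rw [Finset.sum_div]
        _ ≤ (∑ n ∈ Finset.range d, L n) / Real.sqrt (k:ℝ) := by
            have hq : (0:ℝ) < Real.sqrt (k:ℝ) := by positivity
            rw [div_le_div_iff_of_pos_right hq]
            exact Finset.sum_le_sum_of_subset_of_nonneg
                (Finset.range_subset_range.mpr (by omega)) (fun n _ _ => hL0 n)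
        _ ≤ r₁ / Real.sqrt (k:ℝ) := by
            have hq : (0:ℝ) < Real.sqrt (k:ℝ) := by positivity
            rw [div_le_div_iff_of_pos_right hq, hLsum]
            exact hv1
    have hr1k : r₁ / Real.sqrt (k:ℝ) = r₂ := by
      rw [hr₁, hsqrt, mul_comm, mul_div_assoc, div_self (by positivity), mul_one]
    linarith [hnorm0]
  -- set of sparse vectors
  set S : Set (EuclideanSpace ℝ (Fin d)) :=
    {w : EuclideanSpace ℝ (Fin d) |
      ((Function.support w).ncard : ℝ) ≤ (r₁ / r₂) ^ 2 ∧ ‖w‖ ≤ r₂} with hS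
  have h0S : (0 : EuclideanSpace ℝ (Fin d)) ∈ S := by
    refine ⟨?_, by simp [hr₂.le]⟩
    have h00 : Function.support (0 : EuclideanSpace ℝ (Fin d)) = ∅ := Function.support_zero
    rw [h00, Set.ncard_empty, ← hkr]
    exact_mod_cast Nat.zero_le k
  set z : ℕ → EuclideanSpace ℝ (Fin d) := fun m => (r₂ / ‖u m‖) • u m with hz
  have hsuppu : ∀ m, Function.support (u m) ⊆ ↑(T m) := by
    intro m i hi
    rw [Function.mem_support] at hi
    by_contra h
    apply hi
    show (if i ∈ T m then v i else 0) = 0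
    exact if_neg (by simpa using h)
  have hzS : ∀ m, z m ∈ S := by
    intro m
    by_cases h : u m = 0
    · rw [hz]; simp only [h, smul_zero]; exact h0S
    · constructor
      · have hsub : Function.support (z m) ⊆ ↑(T m) := by
          rw [hz]
          intro i hi
          apply hsuppu m
          rw [Function.mem_support] at hi ⊢
          intro h0
          apply hi
          show (r₂ / ‖u m‖) * (u m i) = 0
          rw [h0, mul_zero]
        calc ((Function.support (z m)).ncard : ℝ)
            ≤ ((↑(T m) : Set (Fin d)).ncard : ℝ) := by
              exact_mod_cast Set.ncard_le_ncard hsub (Set.toFinite _)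
          _ = ((T m).card : ℝ) := by rw [Set.ncard_coe_finset]
          _ ≤ (k : ℝ) := by exact_mod_cast hcardT m
          _ = (r₁ / r₂)^2 := hkr
      · have hn : ‖u m‖ ≠ 0 := norm_ne_zero_iff.mpr h
        rw [hz, norm_smul, Real.norm_eq_abs, abs_of_nonneg (by positivity),
          div_mul_cancel₀ _ hn]
  -- convex combination
  have hW0 : ∀ m, 0 ≤ ‖u m‖ / (2 * r₂) := fun m => by positivity
  set W : ℝ := ∑ m ∈ Finset.range d, ‖u m‖ / (2 * r₂) with hWdef
  have hW1 : W ≤ 1 := by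
    rw [hWdef, ← Finset.sum_div]
    rw [div_le_one (by positivity)]
    simpa using hsumnorm
  rw [Set.mem_smul_set_iff_inv_smul_mem₀ (two_ne_zero) _ _]
  set w : ℕ → ℝ := fun m => if m < d then ‖u m‖ / (2 * r₂) else 1 - W with hw
  set zz : ℕ → EuclideanSpace ℝ (Fin d) := fun m => if m < d then z m else 0 with hzz
  have hmem : ∑ m ∈ Finset.range (d+1), w m • zz m ∈ convexHull ℝ S := by
    apply (convex_convexHull ℝ S).sum_mem
    · intro m _
      rw [hw]
      by_cases h : m < d
      · simp only [h, if_pos]; exact hW0 m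
      · simp only [h, if_neg, if_false]; linarith
    · rw [Finset.sum_range_succ]
      have h1 : ∑ m ∈ Finset.range d, w m = W := by
        rw [hWdef]
        refine Finset.sum_congr rfl fun m hm => ?_
        rw [hw]
        simp [Finset.mem_range.mp hm]
      rw [h1, hw]
      simp
    · intro m _
      apply subset_convexHull
      rw [hzz]
      by_cases h : m < d
      · simp only [h, if_pos]; exact hzS m
      · simp only [h, if_neg, if_false]; exact h0S
  have heq : ∑ m ∈ Finset.range (d+1), w m • zz m = (2:ℝ)⁻¹ • v := by
    rw [Finset.sum_range_succ]
    have hlast : w d • zz d = 0 := by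
      rw [hzz]; simp
    rw [hlast, add_zero]
    have hterm : ∀ m ∈ Finset.range d, w m • zz m = (2:ℝ)⁻¹ • u m := by
      intro m hm
      have hmd := Finset.mem_range.mp hm
      rw [hw, hzz]
      simp only [hmd, if_pos]
      rw [hz, smul_smul]
      by_cases h : u m = 0
      · rw [h, smul_zero, smul_zero]
      · congr 1
        have hn : ‖u m‖ ≠ 0 := norm_ne_zero_iff.mpr h
        field_simp
    rw [Finset.sum_congr rfl hterm, ← Finset.smul_sum, hvsum]
  rw [← heq]
  exact hmem
end

section
/- Let s ≤ d with d/s ≥ 3 and r > 0. Then the Dudley entropy integral of the set T = {v ∈ ℝ^d : ‖v‖₀ ≤ 9s, ‖v‖₂ ≤ r} satisfies ∫₀^r √(log N(T, ε)) dε ≤ C·r·√(s·log(d/s)) for a universal constant C. -/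
open MeasureTheory Metric Set
open scoped ENNReal

/-- The minimal cardinality of an `ε`-net (covering number) of a set `T` in `ℝ^d`. -/
noncomputable def coveringNumber {d : ℕ} (T : Set (EuclideanSpace ℝ (Fin d)))
    (ε : ℝ) : ℕ :=
  sInf {n : ℕ | ∃ F : Finset (EuclideanSpace ℝ (Fin d)), F.card = n ∧
    ∀ v ∈ T, ∃ u ∈ F, ‖v - u‖ ≤ ε}


lemma my_sqrt_add_le {x y : ℝ} (hx : 0 ≤ x) (hy : 0 ≤ y) :
    Real.sqrt (x + y) ≤ Real.sqrt x + Real.sqrt y := by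
  have h : x + y ≤ (Real.sqrt x + Real.sqrt y) ^ 2 := by
    have hx' := Real.sq_sqrt hx
    have hy' := Real.sq_sqrt hy
    have := mul_nonneg (Real.sqrt_nonneg x) (Real.sqrt_nonneg y)
    nlinarith
  calc Real.sqrt (x + y) ≤ Real.sqrt ((Real.sqrt x + Real.sqrt y) ^ 2) := Real.sqrt_le_sqrt h
    _ = Real.sqrt x + Real.sqrt y := Real.sqrt_sq (by positivity)

lemma my_pow_le_exp_factorial : ∀ k : ℕ, (k : ℝ) ^ k ≤ Real.exp 1 ^ k * (k.factorial : ℝ)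
  | 0 => by simp
  | (k+1) => by
    have IH := my_pow_le_exp_factorial k
    have hk1 : (0:ℝ) < k + 1 := by positivity
    have key : ((k:ℝ) + 1) ^ k ≤ Real.exp 1 * (k:ℝ) ^ k := by
      rcases Nat.eq_zero_or_pos k with hk | hk
      · subst hk
        simpa using (by nlinarith [Real.exp_one_gt_d9] : (1:ℝ) ≤ Real.exp 1)
      · have hkpos : (0:ℝ) < k := by exact_mod_cast hk
        have h1 : (1 : ℝ) + 1 / k ≤ Real.exp (1 / k) := by
          have := Real.add_one_le_exp (1 / (k:ℝ)); linarith
        have h2 : ((1:ℝ) + 1 / k) ^ k ≤ Real.exp (1 / k) ^ k :=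
          pow_le_pow_left₀ (by positivity) h1 k
        have h3 : Real.exp (1 / (k:ℝ)) ^ k = Real.exp 1 := by
          rw [← Real.exp_nat_mul]
          congr 1
          field_simp
        have h4 : ((k:ℝ) + 1) ^ k = ((1:ℝ) + 1 / k) ^ k * (k:ℝ) ^ k := by
          rw [← mul_pow]; congr 1; field_simp
        rw [h4]
        apply mul_le_mul_of_nonneg_right _ (by positivity)
        rw [← h3]; exact h2
    have hcast : ((k+1 : ℕ) : ℝ) = (k:ℝ) + 1 := by push_cast; ring
    rw [hcast]
    have this2 : ((k:ℝ) + 1) ^ (k + 1) = ((k:ℝ) + 1) ^ k * ((k:ℝ) + 1) := by ring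
    rw [this2]
    calc ((k:ℝ) + 1) ^ k * ((k:ℝ) + 1) ≤ (Real.exp 1 * (k:ℝ) ^ k) * ((k:ℝ)+1) := by
            apply mul_le_mul_of_nonneg_right key (by positivity)
      _ ≤ (Real.exp 1 * (Real.exp 1 ^ k * (k.factorial : ℝ))) * ((k:ℝ)+1) := by
            apply mul_le_mul_of_nonneg_right _ (by positivity)
            exact mul_le_mul_of_nonneg_left IH (Real.exp_pos 1).le
      _ = Real.exp 1 ^ (k+1) * ((k:ℝ)+1) * (k.factorial : ℝ) := by ring
      _ = Real.exp 1 ^ (k+1) * ((k+1).factorial : ℝ) := by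
            rw [Nat.factorial_succ]; push_cast; ring


lemma my_sep_card_le {k : ℕ} (hk : 1 ≤ k) {r ε : ℝ} (hε : 0 < ε) (hεr : ε ≤ r)
    (P : Finset (EuclideanSpace ℝ (Fin k)))
    (hPr : ∀ p ∈ P, ‖p‖ ≤ r)
    (hsep : ∀ p ∈ P, ∀ q ∈ P, p ≠ q → ε < dist p q) :
    (P.card : ℝ) ≤ (3 * r / ε) ^ k := by
  have hr : 0 < r := lt_of_lt_of_le hε hεr
  have : Nontrivial (EuclideanSpace ℝ (Fin k)) := by
    refine nontrivial_of_ne (EuclideanSpace.single (⟨0, hk⟩ : Fin k) (1:ℝ)) 0 ?_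
    intro h
    have := congrArg (fun x : EuclideanSpace ℝ (Fin k) => x (⟨0, hk⟩ : Fin k)) h
    simp [EuclideanSpace.single_apply] at this
  set μ : Measure (EuclideanSpace ℝ (Fin k)) := volume with hμ
  have hdisj : (↑P : Set (EuclideanSpace ℝ (Fin k))).PairwiseDisjoint
      (fun p => ball p (ε / 2)) := by
    intro p hp q hq hpq
    exact ball_disjoint_ball (by linarith [hsep p hp q hq hpq])
  have hsub : ∀ p ∈ P, ball p (ε / 2) ⊆ ball (0 : EuclideanSpace ℝ (Fin k)) (r + ε / 2) := by
    intro p hp x hx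
    rw [mem_ball] at hx ⊢
    have h2 : dist p 0 ≤ r := by rw [dist_zero_right]; exact hPr p hp
    calc dist x 0 ≤ dist x p + dist p 0 := dist_triangle _ _ _
      _ < r + ε / 2 := by linarith
  have hmeas : μ (⋃ p ∈ P, ball p (ε / 2)) = ∑ p ∈ P, μ (ball p (ε / 2)) :=
    measure_biUnion_finset hdisj (fun p _ => measurableSet_ball)
  have hle : ∑ p ∈ P, μ (ball p (ε / 2)) ≤ μ (ball (0 : EuclideanSpace ℝ (Fin k)) (r + ε / 2)) := by
    rw [← hmeas]
    exact measure_mono (Set.iUnion₂_subset hsub)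
  have hballp : ∀ p : EuclideanSpace ℝ (Fin k), μ (ball p (ε / 2)) =
      ENNReal.ofReal ((ε / 2) ^ k) * μ (ball 0 1) := by
    intro p
    rw [Measure.addHaar_ball μ p (by linarith : (0:ℝ) ≤ ε / 2), finrank_euclideanSpace_fin]
  have hball0 : μ (ball (0 : EuclideanSpace ℝ (Fin k)) (r + ε / 2)) =
      ENNReal.ofReal ((r + ε / 2) ^ k) * μ (ball 0 1) := by
    rw [Measure.addHaar_ball μ _ (by linarith : (0:ℝ) ≤ r + ε / 2), finrank_euclideanSpace_fin]
  have hB0 : μ (ball (0 : EuclideanSpace ℝ (Fin k)) 1) ≠ 0 :=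
    (measure_ball_pos μ 0 one_pos).ne'
  have hBtop : μ (ball (0 : EuclideanSpace ℝ (Fin k)) 1) ≠ ⊤ :=
    measure_ball_lt_top.ne
  have hsum : ∑ p ∈ P, μ (ball p (ε / 2)) =
      (P.card : ℝ≥0∞) * ENNReal.ofReal ((ε / 2) ^ k) * μ (ball 0 1) := by
    rw [Finset.sum_congr rfl (fun p _ => hballp p), Finset.sum_const, nsmul_eq_mul, mul_assoc]
  rw [hsum, hball0] at hle
  have hle2 : (P.card : ℝ≥0∞) * ENNReal.ofReal ((ε / 2) ^ k) ≤ ENNReal.ofReal ((r + ε / 2) ^ k) :=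
    (ENNReal.mul_le_mul_iff_left hB0 hBtop).mp hle
  have hcast : ((P.card : ℝ≥0∞) * ENNReal.ofReal ((ε / 2) ^ k)) =
      ENNReal.ofReal ((P.card : ℝ) * (ε / 2) ^ k) := by
    rw [ENNReal.ofReal_mul (by positivity)]
    congr 1
    simp [ENNReal.ofReal_natCast]
  rw [hcast] at hle2
  have hreal : (P.card : ℝ) * (ε / 2) ^ k ≤ (r + ε / 2) ^ k := by
    have := (ENNReal.ofReal_le_ofReal_iff (by positivity)).mp hle2
    exact this
  have hpow : ((r + ε / 2) : ℝ) ^ k ≤ (3 * r / ε) ^ k * (ε / 2) ^ k := by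
    rw [← mul_pow]
    apply pow_le_pow_left₀ (by linarith)
    rw [div_mul_eq_mul_div, mul_comm]
    rw [le_div_iff₀ hε]
    ring_nf
    nlinarith
  have hε2k : (0:ℝ) < (ε / 2) ^ k := by positivity
  nlinarith [hreal, hpow]


lemma my_exists_net {E : Type*} [MetricSpace E] (A : Set E) {ε M : ℝ} (hε : 0 < ε)
    (hM : ∀ P : Finset E, ↑P ⊆ A → (∀ p ∈ P, ∀ q ∈ P, p ≠ q → ε < dist p q) → (P.card : ℝ) ≤ M) :
    ∃ F : Finset E, ↑F ⊆ A ∧ (F.card : ℝ) ≤ M ∧ ∀ v ∈ A, ∃ u ∈ F, dist v u ≤ ε := by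
  classical
  set 𝒞 : Set ℕ := {n : ℕ | ∃ P : Finset E, ↑P ⊆ A ∧
    (∀ p ∈ P, ∀ q ∈ P, p ≠ q → ε < dist p q) ∧ P.card = n} with h𝒞
  have hne : 𝒞.Nonempty := ⟨0, ∅, by simp⟩
  have hbdd : BddAbove 𝒞 := by
    refine ⟨Nat.floor (max M 0), ?_⟩
    rintro n ⟨P, hPA, hPsep, rfl⟩
    exact Nat.le_floor (le_max_of_le_left (hM P hPA hPsep))
  obtain ⟨P, hPA, hPsep, hPcard⟩ := Nat.sSup_mem hne hbdd
  refine ⟨P, hPA, ?_, ?_⟩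
  · exact hM P hPA hPsep
  · intro v hv
    by_contra hcon
    push_neg at hcon
    have hvP : v ∉ P := fun hvP => by
      have := hcon v hvP
      simp at this
      linarith
    have hins : (insert v P : Finset E) ∈ {P : Finset E | ↑P ⊆ A ∧
        (∀ p ∈ P, ∀ q ∈ P, p ≠ q → ε < dist p q)} := by
      constructor
      · rw [Finset.coe_insert]
        exact Set.insert_subset hv hPA
      · intro p hp q hq hpq
        rcases Finset.mem_insert.mp hp with rfl | hp'
        · rcases Finset.mem_insert.mp hq with rfl | hq'
          · exact absurd rfl hpq
          · exact hcon q hq'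
        · rcases Finset.mem_insert.mp hq with rfl | hq'
          · rw [dist_comm]; exact hcon p hp'
          · exact hPsep p hp' q hq' hpq
    have hmem : P.card + 1 ∈ 𝒞 := by
      refine ⟨insert v P, hins.1, hins.2, ?_⟩
      rw [Finset.card_insert_of_notMem hvP]
    have h2 := le_csSup hbdd hmem
    omega

def restrictFun {d k : ℕ} (S : Finset (Fin d)) (hS : S.card = k)
    (v : EuclideanSpace ℝ (Fin d)) : EuclideanSpace ℝ (Fin k) :=
  WithLp.toLp 2 (fun j => v (S.orderEmbOfFin hS j))

lemma my_dist_restrict {d k : ℕ} (S : Finset (Fin d)) (hS : S.card = k)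
    (u v : EuclideanSpace ℝ (Fin d))
    (hu : Function.support u ⊆ ↑S) (hv : Function.support v ⊆ ↑S) :
    dist (restrictFun S hS u) (restrictFun S hS v) = dist u v := by
  rw [EuclideanSpace.dist_eq, EuclideanSpace.dist_eq]
  congr 1
  have hmap : S = Finset.univ.map (S.orderEmbOfFin hS).toEmbedding := by
    ext i
    simp only [Finset.mem_map, Finset.mem_univ, true_and]
    constructor
    · intro hi
      have : i ∈ Set.range (S.orderEmbOfFin hS) := by
        rw [Finset.range_orderEmbOfFin]; exact hi
      obtain ⟨j, hj⟩ := this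
      exact ⟨j, hj⟩
    · rintro ⟨j, rfl⟩
      have : (S.orderEmbOfFin hS) j ∈ Set.range (S.orderEmbOfFin hS) := ⟨j, rfl⟩
      rwa [Finset.range_orderEmbOfFin] at this
  have h1 : ∑ i : Fin d, dist (u i) (v i) ^ 2 = ∑ i ∈ S, dist (u i) (v i) ^ 2 := by
    rw [eq_comm]
    apply Finset.sum_subset (Finset.subset_univ S)
    intro i _ hiS
    have hui : u i = 0 := by
      by_contra h
      exact hiS (hu (Function.mem_support.mpr h))
    have hvi : v i = 0 := by
      by_contra h
      exact hiS (hv (Function.mem_support.mpr h))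
    simp [hui, hvi]
  rw [h1]
  have hs2 : ∑ i ∈ S, dist (u i) (v i) ^ 2
      = ∑ j : Fin k, dist (u (S.orderEmbOfFin hS j)) (v (S.orderEmbOfFin hS j)) ^ 2 := by
    conv_lhs => rw [hmap]
    rw [Finset.sum_map]
    rfl
  rw [hs2]
  rfl

lemma my_cov_le {d s : ℕ} (hs1 : 1 ≤ s) (hsd : s ≤ d) {r ε : ℝ} (hε : 0 < ε) (hεr : ε ≤ r) :
    ((coveringNumber {v : EuclideanSpace ℝ (Fin d) |
        ((Function.support v).ncard : ℝ) ≤ 9 * s ∧ ‖v‖ ≤ r} ε : ℕ) : ℝ) ≤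
      (d.choose (min (9*s) d) : ℝ) * (3 * r / ε) ^ (min (9*s) d) := by
  classical
  have hr : 0 < r := lt_of_lt_of_le hε hεr
  set k := min (9*s) d with hk
  have hk1 : 1 ≤ k := le_min (by omega) (by omega)
  have hkd : k ≤ d := min_le_right _ _
  set A : Finset (Fin d) → Set (EuclideanSpace ℝ (Fin d)) :=
    fun S => {v | Function.support v ⊆ ↑S ∧ ‖v‖ ≤ r} with hA
  have hnet : ∀ S : Finset (Fin d), S.card = k →
      ∃ F : Finset (EuclideanSpace ℝ (Fin d)), ↑F ⊆ A S ∧ (F.card : ℝ) ≤ (3*r/ε)^k ∧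
        ∀ v ∈ A S, ∃ u ∈ F, dist v u ≤ ε := by
    intro S hS
    apply my_exists_net _ hε
    intro P hPA hPsep
    set ψ : EuclideanSpace ℝ (Fin d) → EuclideanSpace ℝ (Fin k) :=
      restrictFun S hS with hψ
    have hψ0 : ψ 0 = 0 := rfl
    have hdist : ∀ u ∈ P, ∀ v ∈ P, dist (ψ u) (ψ v) = dist u v := by
      intro u hu v hv
      exact my_dist_restrict S hS u v (hPA hu).1 (hPA hv).1
    have hinj : Set.InjOn ψ ↑P := by
      intro u hu v hv huv
      have := hdist u hu v hv
      rw [huv, dist_self] at this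
      exact (dist_eq_zero.mp this.symm)
    have hcard : (P.image ψ).card = P.card := Finset.card_image_of_injOn hinj
    have hnorm : ∀ p ∈ P.image ψ, ‖p‖ ≤ r := by
      intro p hp
      obtain ⟨v, hv, rfl⟩ := Finset.mem_image.mp hp
      have h0 : Function.support (0 : EuclideanSpace ℝ (Fin d)) ⊆ ↑S := by
        simp [Function.support]
      have := my_dist_restrict S hS v 0 (hPA hv).1 h0
      rw [← dist_zero_right, ← hψ0]
      rw [show dist (ψ v) (ψ 0) = dist v 0 from this, dist_zero_right]
      exact (hPA hv).2
    have hsep' : ∀ p ∈ P.image ψ, ∀ q ∈ P.image ψ, p ≠ q → ε < dist p q := by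
      intro p hp q hq hpq
      obtain ⟨a, ha, rfl⟩ := Finset.mem_image.mp hp
      obtain ⟨b, hb, rfl⟩ := Finset.mem_image.mp hq
      have hab : a ≠ b := fun h => hpq (by rw [h])
      rw [hdist a ha b hb]
      exact hPsep a ha b hb hab
    calc (P.card : ℝ) = ((P.image ψ).card : ℝ) := by rw [hcard]
      _ ≤ (3*r/ε)^k := my_sep_card_le hk1 hε hεr (P.image ψ) hnorm hsep'
  choose net hnetA hnetcard hnetcov using hnet
  set 𝒮 := Finset.powersetCard k (Finset.univ : Finset (Fin d)) with h𝒮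
  set F : Finset (EuclideanSpace ℝ (Fin d)) :=
    𝒮.attach.biUnion (fun S => net S.1 (Finset.mem_powersetCard_univ.mp S.2)) with hF
  have hcover : ∀ v ∈ {v : EuclideanSpace ℝ (Fin d) |
      ((Function.support v).ncard : ℝ) ≤ 9 * s ∧ ‖v‖ ≤ r}, ∃ u ∈ F, ‖v - u‖ ≤ ε := by
    intro v hv
    obtain ⟨hv1, hv2⟩ := hv
    have hfin : (Function.support v).Finite := Set.toFinite _
    have hcard9 : (Function.support v).ncard ≤ 9 * s := by
      have : ((Function.support v).ncard : ℝ) ≤ ((9 * s : ℕ) : ℝ) := by push_cast; exact hv1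
      exact_mod_cast this
    have hcardk : hfin.toFinset.card ≤ k := by
      have he : (Function.support v).ncard = hfin.toFinset.card :=
        Set.ncard_eq_toFinset_card _ hfin
      refine le_min (by omega) ?_
      have := Finset.card_le_univ hfin.toFinset
      simpa using this
    obtain ⟨S, hsub1, _, hScard⟩ := Finset.exists_subsuperset_card_eq
      (Finset.subset_univ hfin.toFinset) hcardk (by simpa using hkd)
    have hSmem : S ∈ 𝒮 := Finset.mem_powersetCard_univ.mpr hScard
    have hvA : v ∈ A S := by
      constructor
      · intro i hi
        exact hsub1 (by simpa using hi)
      · exact hv2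
    obtain ⟨u, hu, hdu⟩ := hnetcov S (Finset.mem_powersetCard_univ.mp hSmem) v hvA
    refine ⟨u, ?_, by rwa [← dist_eq_norm]⟩
    rw [hF]
    apply Finset.mem_biUnion.mpr
    exact ⟨⟨S, hSmem⟩, Finset.mem_attach _ _, hu⟩
  have hcovle : coveringNumber {v : EuclideanSpace ℝ (Fin d) |
      ((Function.support v).ncard : ℝ) ≤ 9 * s ∧ ‖v‖ ≤ r} ε ≤ F.card :=
    Nat.sInf_le ⟨F, rfl, hcover⟩
  have h3 : ∑ _S ∈ 𝒮.attach, ((3*r/ε):ℝ)^k = (d.choose k : ℝ) * (3 * r / ε) ^ k := by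
    rw [Finset.sum_const, Finset.card_attach, h𝒮, Finset.card_powersetCard]
    simp [nsmul_eq_mul]
  have hFcard : (F.card : ℝ) ≤ (d.choose k : ℝ) * (3 * r / ε) ^ k := by
    calc (F.card : ℝ)
        ≤ ((∑ S ∈ 𝒮.attach, (net S.1 (Finset.mem_powersetCard_univ.mp S.2)).card : ℕ) : ℝ) := by
          exact_mod_cast (Finset.card_biUnion_le :
            F.card ≤ ∑ S ∈ 𝒮.attach, (net S.1 (Finset.mem_powersetCard_univ.mp S.2)).card)
      _ ≤ ∑ _S ∈ 𝒮.attach, ((3*r/ε):ℝ)^k := by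
          push_cast
          exact Finset.sum_le_sum (fun S _ => hnetcard S.1 (Finset.mem_powersetCard_univ.mp S.2))
      _ = (d.choose k : ℝ) * (3 * r / ε) ^ k := h3
  exact le_trans (by exact_mod_cast hcovle) hFcard

set_option maxHeartbeats 1000000

/-- Dudley entropy integral bound: there is a universal constant `C` such that for
`s ≤ d` with `d/s ≥ 3` and `r > 0`, the set `T` of `9s`-sparse vectors of `ℓ₂`-norm at
most `r` satisfies `∫₀^r √(log N(T, ε)) dε ≤ C·r·√(s·log(d/s))`. -/
theorem dudley_entropy_integral_sparse :
    ∃ C : ℝ, 0 < C ∧ ∀ (d s : ℕ), 1 ≤ s → s ≤ d → 3 ≤ (d : ℝ) / s → ∀ r : ℝ, 0 < r →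
      (∫ ε in (0 : ℝ)..r, Real.sqrt (Real.log (coveringNumber
          {v : EuclideanSpace ℝ (Fin d) |
            ((Function.support v).ncard : ℝ) ≤ 9 * s ∧ ‖v‖ ≤ r} ε))) ≤
        C * r * Real.sqrt (s * Real.log ((d : ℝ) / s)) := by
  refine ⟨15, by norm_num, ?_⟩
  intro d s hs1 hsd h3 r hr
  set T : Set (EuclideanSpace ℝ (Fin d)) :=
    {v : EuclideanSpace ℝ (Fin d) | ((Function.support v).ncard : ℝ) ≤ 9 * s ∧ ‖v‖ ≤ r} with hT
  set f : ℝ → ℝ := fun ε => Real.sqrt (Real.log (coveringNumber T ε)) with hf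
  set k : ℕ := min (9*s) d with hk
  have hk1 : 1 ≤ k := le_min (by omega) (by omega)
  have hkd : k ≤ d := min_le_right _ _
  have hk9 : k ≤ 9 * s := min_le_left _ _
  have hs0 : (0:ℝ) < s := by exact_mod_cast hs1
  have hd0 : (0:ℝ) < d := by
    have : (1:ℕ) ≤ d := le_trans hs1 hsd
    exact_mod_cast this
  have hk0 : (0:ℝ) < k := by exact_mod_cast hk1
  have hds : (0:ℝ) < (d:ℝ)/s := by positivity
  -- log(d/s) ≥ 1
  have hlog1 : 1 ≤ Real.log ((d:ℝ)/s) := by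
    rw [Real.le_log_iff_exp_le hds]
    calc Real.exp 1 ≤ 3 := by nlinarith [Real.exp_one_lt_d9]
      _ ≤ (d:ℝ)/s := h3
  have hlogpos : 0 < Real.log ((d:ℝ)/s) := lt_of_lt_of_le one_pos hlog1
  -- choose bound
  have hchoose1 : (1:ℝ) ≤ (d.choose k : ℝ) := by
    exact_mod_cast Nat.one_le_iff_ne_zero.mpr (Nat.choose_pos hkd).ne'
  have hchoosebound : Real.log (d.choose k) ≤ (k:ℝ) * (3 * Real.log ((d:ℝ)/s)) := by
    have h1 : (d.choose k : ℝ) * (k.factorial : ℝ) ≤ (d:ℝ)^k := by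
      have := Nat.descFactorial_le_pow d k
      rw [Nat.descFactorial_eq_factorial_mul_choose] at this
      have : ((k.factorial * d.choose k : ℕ) : ℝ) ≤ ((d^k : ℕ) : ℝ) := by exact_mod_cast this
      push_cast at this
      linarith
    have h2 : (d.choose k : ℝ) ≤ (Real.exp 1 * d / k)^k := by
      have hfac : (0:ℝ) < (k.factorial : ℝ) := by exact_mod_cast k.factorial_pos
      have h2a : (d.choose k : ℝ) * (k:ℝ)^k ≤ (Real.exp 1 * d)^k := by
        calc (d.choose k : ℝ) * (k:ℝ)^k
            ≤ (d.choose k : ℝ) * (Real.exp 1 ^ k * (k.factorial : ℝ)) := by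
              apply mul_le_mul_of_nonneg_left (my_pow_le_exp_factorial k) (by positivity)
          _ = ((d.choose k : ℝ) * (k.factorial : ℝ)) * Real.exp 1 ^ k := by ring
          _ ≤ (d:ℝ)^k * Real.exp 1 ^ k := by
              apply mul_le_mul_of_nonneg_right h1 (by positivity)
          _ = (Real.exp 1 * d)^k := by rw [mul_pow]; ring
      rw [div_pow, le_div_iff₀ (by positivity)]
      exact h2a
    have h3' : (Real.exp 1 * d / k) ≤ ((d:ℝ)/s)^(3:ℕ) := by
      have hexp : Real.exp 1 ≤ 2.7182818286 := Real.exp_one_lt_d9.le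
      have hx : (3:ℝ) ≤ (d:ℝ)/s := h3
      have hx2 : (9:ℝ) ≤ ((d:ℝ)/s)^2 := by nlinarith
      have hcube1 : (d:ℝ)/s ≤ ((d:ℝ)/s)^(3:ℕ) := by nlinarith
      have hcube2 : (27:ℝ) ≤ ((d:ℝ)/s)^(3:ℕ) := by nlinarith
      rcases le_total (9*s) d with hcase | hcase
      · have hkeq : k = 9*s := min_eq_left hcase
        rw [hkeq]
        have h9s : ((9*s : ℕ):ℝ) = 9 * s := by push_cast; ring
        rw [h9s]
        have hds9 : Real.exp 1 * d / (9 * s) ≤ (d:ℝ)/s := by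
          rw [div_le_div_iff₀ (by positivity) (by positivity)]
          nlinarith [mul_pos hd0 hs0]
        linarith
      · have hkeq : k = d := min_eq_right hcase
        rw [hkeq]
        have heq : Real.exp 1 * d / d = Real.exp 1 := by field_simp
        rw [heq]
        linarith
    calc Real.log (d.choose k) ≤ Real.log ((Real.exp 1 * d / k)^k) := by
          apply Real.log_le_log (by linarith) h2
      _ = (k:ℝ) * Real.log (Real.exp 1 * d / k) := by rw [Real.log_pow]
      _ ≤ (k:ℝ) * Real.log (((d:ℝ)/s)^(3:ℕ)) := by
          apply mul_le_mul_of_nonneg_left _ (by positivity)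
          apply Real.log_le_log (by positivity) h3'
      _ = (k:ℝ) * (3 * Real.log ((d:ℝ)/s)) := by rw [Real.log_pow]; push_cast; ring
  -- the dominating function
  set g : ℝ → ℝ := fun ε => Real.sqrt (Real.log (d.choose k)) +
      2 * Real.sqrt k * (3*r)^((1:ℝ)/8) * ε ^ (-(1:ℝ)/8) with hg
  -- pointwise bound on Ioc 0 r
  have hfg : ∀ ε ∈ Set.Ioc (0:ℝ) r, f ε ≤ g ε := by
    intro ε hε
    obtain ⟨hε0, hεr⟩ := hε
    have hgnn : 0 ≤ 2 * Real.sqrt k * (3*r)^((1:ℝ)/8) * ε ^ (-(1:ℝ)/8) := by positivity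
    rcases Nat.eq_zero_or_pos (coveringNumber T ε) with hN | hN
    · rw [hf]
      simp only [hN, Nat.cast_zero, Real.log_zero, Real.sqrt_zero]
      have : 0 ≤ Real.sqrt (Real.log (d.choose k)) := Real.sqrt_nonneg _
      rw [hg]; dsimp only; linarith
    · have hN0 : (0:ℝ) < (coveringNumber T ε : ℝ) := by exact_mod_cast hN
      have hcov := my_cov_le (d := d) (s := s) hs1 hsd hε0 hεr
      rw [← hT, ← hk] at hcov
      have ht0 : (0:ℝ) < 3 * r / ε := by positivity
      have ht3 : (3:ℝ) ≤ 3 * r / ε := by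
        rw [le_div_iff₀ hε0]; nlinarith
      have hlogN : Real.log (coveringNumber T ε) ≤
          Real.log (d.choose k) + (k:ℝ) * Real.log (3 * r / ε) := by
        calc Real.log (coveringNumber T ε)
            ≤ Real.log ((d.choose k : ℝ) * (3 * r / ε) ^ k) :=
              Real.log_le_log hN0 hcov
          _ = Real.log (d.choose k) + (k:ℝ) * Real.log (3 * r / ε) := by
              rw [Real.log_mul (by positivity) (by positivity), Real.log_pow]
    -- bound sqrt
      have hlogchoosenn : 0 ≤ Real.log (d.choose k) := Real.log_nonneg hchoose1
      have hlogtnn : 0 ≤ Real.log (3 * r / ε) := Real.log_nonneg (by linarith)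
      have hsq1 : f ε ≤ Real.sqrt (Real.log (d.choose k)) +
          Real.sqrt ((k:ℝ) * Real.log (3 * r / ε)) := by
        rw [hf]
        calc Real.sqrt (Real.log (coveringNumber T ε))
            ≤ Real.sqrt (Real.log (d.choose k) + (k:ℝ) * Real.log (3 * r / ε)) :=
              Real.sqrt_le_sqrt hlogN
          _ ≤ _ := my_sqrt_add_le hlogchoosenn (by positivity)
      have hsq2 : Real.sqrt ((k:ℝ) * Real.log (3 * r / ε)) =
          Real.sqrt k * Real.sqrt (Real.log (3 * r / ε)) := Real.sqrt_mul (by positivity) _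
      -- log t ≤ 4 t^{1/4}
      have hlt : Real.log (3 * r / ε) ≤ 4 * (3 * r / ε) ^ ((1:ℝ)/4) := by
        have h14 : Real.log ((3 * r / ε) ^ ((1:ℝ)/4)) = (1/4) * Real.log (3 * r / ε) :=
          Real.log_rpow ht0 _
        have hpos : (0:ℝ) < (3 * r / ε) ^ ((1:ℝ)/4) := Real.rpow_pos_of_pos ht0 _
        have := Real.log_le_sub_one_of_pos hpos
        nlinarith
      have hsqrtlog : Real.sqrt (Real.log (3 * r / ε)) ≤ 2 * (3 * r / ε) ^ ((1:ℝ)/8) := by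
        calc Real.sqrt (Real.log (3 * r / ε)) ≤ Real.sqrt (4 * (3 * r / ε) ^ ((1:ℝ)/4)) :=
              Real.sqrt_le_sqrt hlt
          _ = 2 * Real.sqrt ((3 * r / ε) ^ ((1:ℝ)/4)) := by
              rw [Real.sqrt_mul (by norm_num : (0:ℝ) ≤ 4),
                show Real.sqrt 4 = 2 by
                  rw [show (4:ℝ) = 2^2 by norm_num, Real.sqrt_sq (by norm_num : (0:ℝ) ≤ 2)]]
          _ = 2 * (3 * r / ε) ^ ((1:ℝ)/8) := by
              rw [Real.sqrt_eq_rpow, ← Real.rpow_mul ht0.le]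
              norm_num
      have hsplit : (3 * r / ε) ^ ((1:ℝ)/8) = (3*r)^((1:ℝ)/8) * ε ^ (-(1:ℝ)/8) := by
        rw [Real.div_rpow (by positivity) hε0.le]
        rw [div_eq_mul_inv, ← Real.rpow_neg hε0.le]
        norm_num
      calc f ε ≤ Real.sqrt (Real.log (d.choose k)) +
            Real.sqrt ((k:ℝ) * Real.log (3 * r / ε)) := hsq1
        _ = Real.sqrt (Real.log (d.choose k)) +
            Real.sqrt k * Real.sqrt (Real.log (3 * r / ε)) := by rw [hsq2]
        _ ≤ Real.sqrt (Real.log (d.choose k)) +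
            Real.sqrt k * (2 * (3 * r / ε) ^ ((1:ℝ)/8)) := by
              have := mul_le_mul_of_nonneg_left hsqrtlog (Real.sqrt_nonneg (k:ℝ))
              linarith
        _ = g ε := by rw [hg]; dsimp only; rw [hsplit]; ring
  -- integrability of g
  have hgint : IntervalIntegrable g volume 0 r := by
    apply IntervalIntegrable.add
    · exact intervalIntegrable_const
    · have : IntervalIntegrable (fun ε : ℝ => ε ^ (-(1:ℝ)/8)) volume 0 r := by
        apply intervalIntegral.intervalIntegrable_rpow'
        norm_num
      simpa [mul_assoc] using this.const_mul (2 * Real.sqrt k * (3*r)^((1:ℝ)/8))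
  -- integral of g
  have hgval : (∫ ε in (0:ℝ)..r, g ε) =
      Real.sqrt (Real.log (d.choose k)) * r +
        2 * Real.sqrt k * (3*r)^((1:ℝ)/8) * (r ^ ((7:ℝ)/8) / (7/8)) := by
    rw [hg]
    rw [intervalIntegral.integral_add intervalIntegrable_const
      (by simpa [mul_assoc] using ((intervalIntegral.intervalIntegrable_rpow'
        (by norm_num : (-1:ℝ) < -(1:ℝ)/8)).const_mul (2 * Real.sqrt k * (3*r)^((1:ℝ)/8))) :
        IntervalIntegrable (fun ε : ℝ => 2 * Real.sqrt k * (3*r)^((1:ℝ)/8) * ε ^ (-(1:ℝ)/8))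
          volume 0 r)]
    rw [intervalIntegral.integral_const, intervalIntegral.integral_const_mul]
    rw [integral_rpow (Or.inl (by norm_num))]
    rw [Real.zero_rpow (by norm_num : (-(1:ℝ)/8 + 1) ≠ 0)]
    norm_num
    ring
  -- auxiliary numeric facts
  set Lg : ℝ := Real.log ((d:ℝ)/s) with hLg
  have hsk3 : Real.sqrt k ≤ 3 * Real.sqrt s := by
    have hks : (k:ℝ) ≤ 9 * s := by exact_mod_cast hk9
    calc Real.sqrt k ≤ Real.sqrt (9*s) := Real.sqrt_le_sqrt hks
      _ = 3 * Real.sqrt s := by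
          rw [show (9:ℝ)*s = 3^2 * s by ring, Real.sqrt_mul (by positivity),
            Real.sqrt_sq (by norm_num : (0:ℝ) ≤ 3)]
  have hsqLg1 : 1 ≤ Real.sqrt Lg := by
    rw [show (1:ℝ) = Real.sqrt 1 by simp]
    exact Real.sqrt_le_sqrt hlog1
  have hsqLg0 : 0 ≤ Real.sqrt Lg := Real.sqrt_nonneg _
  have hsk0 : 0 ≤ Real.sqrt k := Real.sqrt_nonneg _
  have hss0 : 0 ≤ Real.sqrt s := Real.sqrt_nonneg _
  have hA : Real.sqrt (Real.log (d.choose k)) ≤ 2 * Real.sqrt k * Real.sqrt Lg := by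
    have h32 : Real.sqrt 3 ≤ 2 := by
      calc Real.sqrt 3 ≤ Real.sqrt 4 := Real.sqrt_le_sqrt (by norm_num)
        _ = 2 := by rw [show (4:ℝ) = 2^2 by norm_num, Real.sqrt_sq (by norm_num : (0:ℝ) ≤ 2)]
    calc Real.sqrt (Real.log (d.choose k)) ≤ Real.sqrt ((k:ℝ) * (3 * Lg)) :=
          Real.sqrt_le_sqrt hchoosebound
      _ = Real.sqrt k * Real.sqrt (3 * Lg) := Real.sqrt_mul (by positivity) _
      _ = Real.sqrt k * (Real.sqrt 3 * Real.sqrt Lg) := by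
          rw [Real.sqrt_mul (by norm_num : (0:ℝ) ≤ 3)]
      _ ≤ Real.sqrt k * (2 * Real.sqrt Lg) := by
          apply mul_le_mul_of_nonneg_left _ hsk0
          exact mul_le_mul_of_nonneg_right h32 hsqLg0
      _ = 2 * Real.sqrt k * Real.sqrt Lg := by ring
  have h318 : ((3:ℝ))^((1:ℝ)/8) ≤ 21/16 := by
    have h1 : ((3:ℝ))^((1:ℝ)/8) ≤ (((21:ℝ)/16)^(8:ℕ))^((1:ℝ)/8) := by
      apply Real.rpow_le_rpow (by norm_num) (by norm_num) (by norm_num)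
    have h2 : (((21:ℝ)/16)^(8:ℕ))^((1:ℝ)/8) = (21:ℝ)/16 := by
      rw [← Real.rpow_natCast ((21:ℝ)/16) 8, ← Real.rpow_mul (by norm_num)]
      norm_num
    rw [h2] at h1
    exact h1
  have hterm2 : 2 * Real.sqrt k * (3*r)^((1:ℝ)/8) * (r ^ ((7:ℝ)/8) / (7/8)) ≤
      3 * Real.sqrt k * r := by
    rw [Real.mul_rpow (by norm_num) hr.le]
    have hrr : r^((1:ℝ)/8) * r^((7:ℝ)/8) = r := by
      rw [← Real.rpow_add hr]
      norm_num
    have heq : 2 * Real.sqrt k * ((3:ℝ)^((1:ℝ)/8) * r^((1:ℝ)/8)) * (r ^ ((7:ℝ)/8) / (7/8))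
        = (16/7) * (3:ℝ)^((1:ℝ)/8) * Real.sqrt k * (r^((1:ℝ)/8) * r^((7:ℝ)/8)) := by
      ring
    rw [heq, hrr]
    have h3eq : (3:ℝ) = (16/7) * (21/16) := by norm_num
    calc (16/7) * (3:ℝ)^((1:ℝ)/8) * Real.sqrt k * r
        ≤ (16/7) * (21/16) * Real.sqrt k * r := by
          apply mul_le_mul_of_nonneg_right _ hr.le
          apply mul_le_mul_of_nonneg_right _ hsk0
          linarith
      _ = 3 * Real.sqrt k * r := by norm_num
  -- final combination
  have hfinal : Real.sqrt (Real.log (d.choose k)) * r +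
      2 * Real.sqrt k * (3*r)^((1:ℝ)/8) * (r ^ ((7:ℝ)/8) / (7/8)) ≤
      15 * r * Real.sqrt ((s:ℝ) * Lg) := by
    have hsplit : Real.sqrt ((s:ℝ) * Lg) = Real.sqrt s * Real.sqrt Lg :=
      Real.sqrt_mul (by positivity) _
    rw [hsplit]
    have t1 : Real.sqrt (Real.log (d.choose k)) * r ≤ 2 * Real.sqrt k * Real.sqrt Lg * r :=
      mul_le_mul_of_nonneg_right hA hr.le
    have t2 : 3 * Real.sqrt k * r ≤ 3 * Real.sqrt k * Real.sqrt Lg * r := by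
      nlinarith [mul_le_mul_of_nonneg_left hsqLg1
        (mul_nonneg (mul_nonneg (by norm_num : (0:ℝ) ≤ 3) hsk0) hr.le)]
    have t3 : 5 * Real.sqrt k * Real.sqrt Lg * r ≤ 5 * (3 * Real.sqrt s) * Real.sqrt Lg * r := by
      nlinarith [mul_le_mul_of_nonneg_right hsk3
        (mul_nonneg hsqLg0 hr.le), hsqLg0, hr.le]
    nlinarith [hterm2, t1, t2, t3]
  -- integral comparison
  by_cases hint : IntervalIntegrable f volume 0 r
  · have hcomp : (∫ ε in (0:ℝ)..r, f ε) ≤ ∫ ε in (0:ℝ)..r, g ε := by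
      apply intervalIntegral.integral_mono_ae_restrict hr.le hint hgint
      have h1 : ∀ᵐ x ∂(volume : Measure ℝ), x ≠ 0 := by
        rw [ae_iff]
        have : {x : ℝ | ¬ x ≠ 0} = {0} := by ext x; simp
        rw [this]
        exact Real.volume_singleton
      have h2 : ∀ᵐ x ∂((volume : Measure ℝ).restrict (Set.Icc (0:ℝ) r)), x ≠ 0 :=
        ae_restrict_of_ae h1
      have h3 : ∀ᵐ x ∂((volume : Measure ℝ).restrict (Set.Icc (0:ℝ) r)),
          x ∈ Set.Icc (0:ℝ) r := ae_restrict_mem measurableSet_Icc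
      filter_upwards [h2, h3] with x hx hxI
      exact hfg x ⟨lt_of_le_of_ne hxI.1 (Ne.symm hx), hxI.2⟩
    calc (∫ ε in (0:ℝ)..r, f ε) ≤ ∫ ε in (0:ℝ)..r, g ε := hcomp
      _ = Real.sqrt (Real.log (d.choose k)) * r +
          2 * Real.sqrt k * (3*r)^((1:ℝ)/8) * (r ^ ((7:ℝ)/8) / (7/8)) := hgval
      _ ≤ 15 * r * Real.sqrt ((s:ℝ) * Lg) := hfinal
  · have : (∫ ε in (0:ℝ)..r, f ε) = 0 := intervalIntegral.integral_undef hint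
    rw [this]
    positivity
end

section
/- Let s ≤ d with d/s ≥ 3 and r > 0. Then ∫₀^r log N(T, ε) dε ≤ C·r·s·log(d/s) for the set T = {v ∈ ℝ^d : ‖v‖₀ ≤ 9s, ‖v‖₂ ≤ r} and a universal constant C. -/
open MeasureTheory Metric Finset ENNReal in
lemma sep_card_le {k : ℕ} {r ε : ℝ} (hε : 0 < ε) (hεr : ε ≤ r)
    (F : Finset (EuclideanSpace ℝ (Fin k))) (hFr : ∀ x ∈ F, ‖x‖ ≤ r)
    (hsep : ∀ x ∈ F, ∀ y ∈ F, x ≠ y → ε < dist x y) :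
    (F.card : ℝ) ≤ (3 * r / ε) ^ k := by
  set μ := (volume : Measure (EuclideanSpace ℝ (Fin k)))
  have hr : 0 < r := lt_of_lt_of_le hε hεr
  have hdisj : (F : Set (EuclideanSpace ℝ (Fin k))).PairwiseDisjoint
      (fun x => closedBall x (ε / 2)) := by
    intro x hx y hy hxy
    rw [Function.onFun, Set.disjoint_left]
    intro z hz hz'
    have h1 : dist z x ≤ ε / 2 := mem_closedBall.1 hz
    have h2 : dist z y ≤ ε / 2 := mem_closedBall.1 hz'
    have := hsep x hx y hy hxy
    have : dist x y ≤ ε := by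
      calc dist x y ≤ dist x z + dist z y := dist_triangle _ _ _
        _ ≤ ε / 2 + ε / 2 := by rw [dist_comm x z]; linarith
        _ = ε := by ring
    linarith [hsep x hx y hy hxy]
  have hfr : Module.finrank ℝ (EuclideanSpace ℝ (Fin k)) = k := finrank_euclideanSpace_fin
  have hball : ∀ x : EuclideanSpace ℝ (Fin k),
      μ (closedBall x (ε / 2)) = ENNReal.ofReal ((ε / 2) ^ k) * μ (ball 0 1) := by
    intro x
    rw [Measure.addHaar_closedBall μ x (by positivity), hfr]
  have hcup : (⋃ x ∈ F, closedBall x (ε / 2)) ⊆ closedBall (0 : EuclideanSpace ℝ (Fin k)) (r + ε / 2) := by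
    refine Set.iUnion₂_subset fun x hx => closedBall_subset_closedBall' ?_
    have := hFr x hx
    rw [dist_zero_right]
    linarith
  have hcount : (F.card : ℝ≥0∞) * ENNReal.ofReal ((ε / 2) ^ k) * μ (ball 0 1)
      ≤ ENNReal.ofReal ((r + ε / 2) ^ k) * μ (ball 0 1) := by
    calc (F.card : ℝ≥0∞) * ENNReal.ofReal ((ε / 2) ^ k) * μ (ball 0 1)
        = ∑ x ∈ F, μ (closedBall x (ε / 2)) := by
          rw [Finset.sum_congr rfl fun x _ => hball x, Finset.sum_const, nsmul_eq_mul, mul_assoc]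
      _ = μ (⋃ x ∈ F, closedBall x (ε / 2)) :=
          (measure_biUnion_finset hdisj fun _ _ => measurableSet_closedBall).symm
      _ ≤ μ (closedBall 0 (r + ε / 2)) := measure_mono hcup
      _ = ENNReal.ofReal ((r + ε / 2) ^ k) * μ (ball 0 1) := by
          rw [Measure.addHaar_closedBall μ 0 (by positivity), hfr]
  have hμpos : μ (ball (0 : EuclideanSpace ℝ (Fin k)) 1) ≠ 0 :=
    (measure_ball_pos μ 0 one_pos).ne'
  have hμtop : μ (ball (0 : EuclideanSpace ℝ (Fin k)) 1) ≠ ⊤ :=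
    measure_ball_lt_top.ne
  have hcount2 : (F.card : ℝ≥0∞) * ENNReal.ofReal ((ε / 2) ^ k)
      ≤ ENNReal.ofReal ((r + ε / 2) ^ k) :=
    (ENNReal.mul_le_mul_iff_left hμpos hμtop).1 hcount
  have hreal : (F.card : ℝ) * (ε / 2) ^ k ≤ (r + ε / 2) ^ k := by
    have := hcount2
    rw [← ENNReal.ofReal_natCast, ← ENNReal.ofReal_mul (by positivity)] at this
    exact (ENNReal.ofReal_le_ofReal_iff (by positivity)).1 this
  have hpow : (F.card : ℝ) ≤ ((r + ε / 2) / (ε / 2)) ^ k := by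
    rw [div_pow, le_div_iff₀ (by positivity)]
    exact hreal
  refine hpow.trans (pow_le_pow_left₀ (by positivity) ?_ k)
  rw [div_le_div_iff₀ (by positivity) hε]
  nlinarith

open MeasureTheory Metric Finset ENNReal in
lemma ball_net {k : ℕ} {r ε : ℝ} (hε : 0 < ε) (hεr : ε ≤ r) :
    ∃ F : Finset (EuclideanSpace ℝ (Fin k)), (F.card : ℝ) ≤ (3 * r / ε) ^ k ∧
      ∀ v : EuclideanSpace ℝ (Fin k), ‖v‖ ≤ r → ∃ u ∈ F, ‖v - u‖ ≤ ε := by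
  classical
  set P : Finset (EuclideanSpace ℝ (Fin k)) → Prop :=
    fun F => (∀ x ∈ F, ‖x‖ ≤ r) ∧ ∀ x ∈ F, ∀ y ∈ F, x ≠ y → ε < dist x y with hP
  set A : Set ℕ := {n | ∃ F, P F ∧ F.card = n} with hA
  have hcardle : ∀ F, P F → (F.card : ℝ) ≤ (3 * r / ε) ^ k := fun F hF =>
    sep_card_le hε hεr F hF.1 hF.2
  have hbdd : BddAbove A := by
    refine ⟨⌈(3 * r / ε) ^ k⌉₊, fun n hn => ?_⟩
    obtain ⟨F, hF, rfl⟩ := hn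
    exact_mod_cast (hcardle F hF).trans (Nat.le_ceil _)
  have hne : A.Nonempty := ⟨0, ∅, ⟨by simp, by simp⟩, rfl⟩
  obtain ⟨F, hF, hFcard⟩ := Nat.sSup_mem hne hbdd
  refine ⟨F, hFcard ▸ hcardle F hF, fun v hv => ?_⟩
  by_cases hvF : v ∈ F
  · exact ⟨v, hvF, by simp [hε.le]⟩
  by_contra hnot
  push_neg at hnot
  have hPins : P (insert v F) := by
    constructor
    · intro x hx
      rcases Finset.mem_insert.1 hx with rfl | hx
      · exact hv
      · exact hF.1 x hx
    · intro x hx y hy hxy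
      rcases Finset.mem_insert.1 hx with rfl | hx
      · rcases Finset.mem_insert.1 hy with rfl | hy
        · exact absurd rfl hxy
        · rw [dist_eq_norm]; exact hnot y hy
      · rcases Finset.mem_insert.1 hy with hy | hy
        · rw [hy, dist_comm, dist_eq_norm]; exact hnot x hx
        · exact hF.2 x hx y hy hxy
  have : (insert v F).card ∈ A := ⟨_, hPins, rfl⟩
  have hle := le_csSup hbdd this
  rw [Finset.card_insert_of_notMem hvF, hFcard] at hle
  omega

open MeasureTheory Metric Finset ENNReal in
noncomputable def extS {d k : ℕ} (S : Finset (Fin d)) (hS : S.card = k)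
    (x : EuclideanSpace ℝ (Fin k)) : EuclideanSpace ℝ (Fin d) :=
  WithLp.toLp 2 (fun i => if h : i ∈ S then x ((S.orderIsoOfFin hS).symm ⟨i, h⟩) else 0)

open MeasureTheory Metric Finset ENNReal in
lemma extS_sub {d k : ℕ} (S : Finset (Fin d)) (hS : S.card = k)
    (x y : EuclideanSpace ℝ (Fin k)) :
    extS S hS x - extS S hS y = extS S hS (x - y) := by
  ext i
  simp only [PiLp.sub_apply, extS, PiLp.toLp_apply]
  split
  · simp [PiLp.sub_apply]
  · simp

open MeasureTheory Metric Finset ENNReal in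
lemma norm_extS {d k : ℕ} (S : Finset (Fin d)) (hS : S.card = k)
    (x : EuclideanSpace ℝ (Fin k)) : ‖extS S hS x‖ = ‖x‖ := by
  rw [EuclideanSpace.norm_eq, EuclideanSpace.norm_eq]
  congr 1
  rw [← Finset.sum_subset (Finset.subset_univ S)
    (fun i _ hi => by simp [extS, hi])]
  rw [← Finset.sum_coe_sort S (fun i => ‖extS S hS x i‖ ^ 2)]
  rw [← Equiv.sum_comp (S.orderIsoOfFin hS).toEquiv
    (fun i : S => ‖extS S hS x (i : Fin d)‖ ^ 2)]
  refine Finset.sum_congr rfl fun j _ => ?_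
  have hmem : ((S.orderIsoOfFin hS j : S) : Fin d) ∈ S := (S.orderIsoOfFin hS j).2
  simp only [extS, RelIso.coe_fn_toEquiv, PiLp.toLp_apply]
  rw [dif_pos hmem]
  congr 1
  rw [show (⟨((S.orderIsoOfFin hS j : S) : Fin d), hmem⟩ : S) = S.orderIsoOfFin hS j from
    Subtype.ext rfl]
  rw [(S.orderIsoOfFin hS).symm_apply_apply j]

open MeasureTheory Metric Finset ENNReal in
lemma extS_eq_self {d k : ℕ} (S : Finset (Fin d)) (hS : S.card = k)
    (v : EuclideanSpace ℝ (Fin d)) (hsupp : Function.support v ⊆ ↑S) :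
    extS S hS (WithLp.toLp 2 (fun j => v ((S.orderIsoOfFin hS j : S) : Fin d))) = v := by
  ext i
  simp only [extS, PiLp.toLp_apply]
  split
  · rename_i h
    have : ((S.orderIsoOfFin hS ((S.orderIsoOfFin hS).symm ⟨i, h⟩) : S) : Fin d) = i := by
      rw [(S.orderIsoOfFin hS).apply_symm_apply ⟨i, h⟩]
    rw [this]
  · rename_i h
    by_contra hne
    exact h (hsupp (Function.mem_support.2 fun h0 => hne h0.symm))

open MeasureTheory Metric Finset ENNReal in
lemma covering_bound {d s : ℕ} (hs : 1 ≤ s) (hsd : s ≤ d) {r ε : ℝ}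
    (hε : 0 < ε) (hεr : ε ≤ r) :
    (coveringNumber {v : EuclideanSpace ℝ (Fin d) |
        ((Function.support v).ncard : ℝ) ≤ 9 * s ∧ ‖v‖ ≤ r} ε : ℝ)
      ≤ (d.choose (min (9 * s) d)) * (3 * r / ε) ^ (min (9 * s) d) := by
  classical
  set k := min (9 * s) d with hk
  obtain ⟨F₀, hF₀card, hF₀net⟩ := ball_net (k := k) hε hεr
  set 𝒩 : Finset (EuclideanSpace ℝ (Fin d)) :=
    (Finset.univ.powersetCard k).biUnion
      (fun S => if hS : S.card = k then F₀.image (extS S hS) else ∅) with h𝒩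
  have hcover : ∀ v ∈ {v : EuclideanSpace ℝ (Fin d) |
      ((Function.support v).ncard : ℝ) ≤ 9 * s ∧ ‖v‖ ≤ r}, ∃ u ∈ 𝒩, ‖v - u‖ ≤ ε := by
    rintro v ⟨hvs, hvr⟩
    have hfin : (Function.support v).Finite := Set.toFinite _
    set A := hfin.toFinset with hA
    have hAcard : A.card ≤ k := by
      refine le_min ?_ ?_
      · have : ((Function.support v).ncard : ℝ) ≤ ((9 * s : ℕ) : ℝ) := by push_cast; exact hvs
        have := Nat.cast_le.1 this
        rwa [Set.ncard_eq_toFinset_card _ hfin] at this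
      · exact (Finset.card_le_univ A).trans_eq (by simp)
    obtain ⟨S, hAS, -, hScard⟩ := Finset.exists_subsuperset_card_eq (Finset.subset_univ A)
      hAcard (by simp [hk])
    have hsupp : Function.support v ⊆ ↑S := fun i hi =>
      hAS (hfin.mem_toFinset.2 hi)
    set x : EuclideanSpace ℝ (Fin k) :=
      WithLp.toLp 2 (fun j => v ((S.orderIsoOfFin hScard j : S) : Fin d)) with hx
    have hvx : extS S hScard x = v := extS_eq_self S hScard v hsupp
    have hxnorm : ‖x‖ ≤ r := by
      rw [← norm_extS S hScard x, hvx]; exact hvr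
    obtain ⟨u₀, hu₀F, hu₀⟩ := hF₀net x hxnorm
    refine ⟨extS S hScard u₀, ?_, ?_⟩
    · refine Finset.mem_biUnion.2 ⟨S, Finset.mem_powersetCard_univ.2 hScard, ?_⟩
      rw [dif_pos hScard]
      exact Finset.mem_image_of_mem _ hu₀F
    · rw [← hvx, extS_sub, norm_extS]
      exact hu₀
  have hcovle : coveringNumber {v : EuclideanSpace ℝ (Fin d) |
      ((Function.support v).ncard : ℝ) ≤ 9 * s ∧ ‖v‖ ≤ r} ε ≤ 𝒩.card :=
    Nat.sInf_le ⟨𝒩, rfl, hcover⟩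
  have hcard : (𝒩.card : ℝ) ≤ (d.choose k) * (3 * r / ε) ^ k := by
    have h1 : 𝒩.card ≤ ((Finset.univ : Finset (Fin d)).powersetCard k).card * F₀.card := by
      refine (Finset.card_biUnion_le).trans ?_
      refine (Finset.sum_le_card_nsmul _ _ F₀.card fun S _ => ?_).trans_eq (by
        rw [smul_eq_mul])
      split
      · exact Finset.card_image_le
      · simp
    have h2 : ((Finset.univ : Finset (Fin d)).powersetCard k).card = d.choose k := by
      rw [Finset.card_powersetCard, Finset.card_univ, Fintype.card_fin]
    calc (𝒩.card : ℝ) ≤ (((Finset.univ : Finset (Fin d)).powersetCard k).card * F₀.card : ℕ) := by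
          exact_mod_cast h1
      _ = (d.choose k : ℝ) * (F₀.card : ℝ) := by rw [h2]; push_cast; ring
      _ ≤ (d.choose k) * (3 * r / ε) ^ k := by
          exact mul_le_mul_of_nonneg_left hF₀card (by positivity)
  exact (Nat.cast_le.2 hcovle).trans hcard

open MeasureTheory Metric Finset ENNReal in
lemma log_le_two_sqrt {y : ℝ} (hy : 0 < y) : Real.log y ≤ 2 * Real.sqrt y := by
  have h1 : Real.log (Real.sqrt y) ≤ Real.sqrt y - 1 :=
    Real.log_le_sub_one_of_pos (Real.sqrt_pos.2 hy)
  have h2 : Real.log (Real.sqrt y) = Real.log y / 2 := Real.log_sqrt hy.le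
  nlinarith [Real.sqrt_nonneg y]

open MeasureTheory Metric Finset ENNReal in
lemma log_choose_le {d k : ℕ} (hk : 1 ≤ k) (hkd : k ≤ d) :
    Real.log (d.choose k) ≤ (k : ℝ) * (1 + Real.log ((d : ℝ) / k)) := by
  have hk0 : (0 : ℝ) < k := by exact_mod_cast hk
  have hd0 : (0 : ℝ) < d := by exact_mod_cast hk.trans hkd
  have h1 : (d.choose k : ℝ) ≤ (d : ℝ) ^ k / (k.factorial : ℝ) :=
    Nat.choose_le_pow_div k d
  have h2 : ((k : ℝ)) ^ k / (k.factorial : ℝ) ≤ Real.exp k := by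
    refine le_trans ?_ (Real.sum_le_exp_of_nonneg (by positivity) (k + 1))
    exact Finset.single_le_sum (f := fun i => (k : ℝ) ^ i / (i.factorial : ℝ))
      (fun i _ => by positivity) (Finset.self_mem_range_succ k)
  have h3 : (d.choose k : ℝ) ≤ ((d : ℝ) * Real.exp 1 / k) ^ k := by
    rw [div_pow, mul_pow, Real.exp_one_pow, le_div_iff₀ (by positivity)]
    calc (d.choose k : ℝ) * (k : ℝ) ^ k
        ≤ ((d : ℝ) ^ k / (k.factorial : ℝ)) * (k : ℝ) ^ k :=
          mul_le_mul_of_nonneg_right h1 (by positivity)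
      _ = (d : ℝ) ^ k * ((k : ℝ) ^ k / (k.factorial : ℝ)) := by ring
      _ ≤ (d : ℝ) ^ k * Real.exp k := mul_le_mul_of_nonneg_left h2 (by positivity)
  have hcpos : (0 : ℝ) < (d.choose k : ℝ) := by
    exact_mod_cast Nat.choose_pos hkd
  calc Real.log (d.choose k) ≤ Real.log (((d : ℝ) * Real.exp 1 / k) ^ k) :=
        Real.log_le_log hcpos h3
    _ = (k : ℝ) * Real.log ((d : ℝ) * Real.exp 1 / k) := by rw [Real.log_pow]
    _ = (k : ℝ) * (1 + Real.log ((d : ℝ) / k)) := by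
        rw [show (d : ℝ) * Real.exp 1 / k = (d : ℝ) / k * Real.exp 1 by ring,
          Real.log_mul (by positivity) (Real.exp_ne_zero 1), Real.log_exp]
        ring

open MeasureTheory Metric Finset ENNReal

/-- γ₁-type entropy integral bound: there is a universal constant `C` such that for
`s ≤ d` with `d/s ≥ 3` and `r > 0`, the set `T` of `9s`-sparse vectors of `ℓ₂`-norm at
most `r` satisfies `∫₀^r log N(T, ε) dε ≤ C·r·s·log(d/s)`. -/
theorem entropy_integral_first_order_sparse :
    ∃ C : ℝ, 0 < C ∧ ∀ (d s : ℕ), 1 ≤ s → s ≤ d → 3 ≤ (d : ℝ) / s → ∀ r : ℝ, 0 < r →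
      (∫ ε in (0 : ℝ)..r, Real.log (coveringNumber
          {v : EuclideanSpace ℝ (Fin d) |
            ((Function.support v).ncard : ℝ) ≤ 9 * s ∧ ‖v‖ ≤ r} ε)) ≤
        C * r * (s : ℝ) * Real.log ((d : ℝ) / s) := by
  refine ⟨100, by norm_num, ?_⟩
  intro d s hs hsd hds r hr
  classical
  set k := min (9 * s) d with hk
  set L := Real.log ((d : ℝ) / s) with hL
  have hs1 : (1 : ℝ) ≤ s := by exact_mod_cast hs
  have hd1 : 1 ≤ d := hs.trans hsd
  have hL1 : (1 : ℝ) ≤ L := by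
    have h3 : Real.exp 1 ≤ 3 := Real.exp_one_lt_d9.le.trans (by norm_num)
    calc (1 : ℝ) = Real.log (Real.exp 1) := (Real.log_exp 1).symm
      _ ≤ Real.log 3 := Real.log_le_log (Real.exp_pos 1) h3
      _ ≤ L := Real.log_le_log (by norm_num) hds
  have hk1 : 1 ≤ k := le_min (by omega) (by omega)
  have hkd : k ≤ d := min_le_right _ _
  have hks : s ≤ k := le_min (by omega) hsd
  have hk9 : (k : ℝ) ≤ 9 * s := by
    have := min_le_left (9 * s) d
    exact_mod_cast (by push_cast; exact_mod_cast this : (k : ℝ) ≤ ((9 * s : ℕ) : ℝ))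
  have hsk : (s : ℝ) ≤ k := by exact_mod_cast hks
  have hchoose : Real.log (d.choose k) ≤ (k : ℝ) * (1 + L) := by
    refine (log_choose_le hk1 hkd).trans ?_
    have hdk : Real.log ((d : ℝ) / k) ≤ L := by
      refine Real.log_le_log (by positivity) ?_
      exact div_le_div_of_nonneg_left (by positivity) (by positivity) hsk
    exact mul_le_mul_of_nonneg_left (by linarith) (Nat.cast_nonneg k)
  -- the dominating function
  set c₂ : ℝ := (k : ℝ) * (2 * Real.sqrt (3 * r)) with hc₂
  set g : ℝ → ℝ := fun ε => Real.log (d.choose k) + c₂ * ε ^ (-(1/2) : ℝ) with hg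
  have hgInt : IntervalIntegrable g volume 0 r :=
    (intervalIntegrable_const).add
      ((intervalIntegral.intervalIntegrable_rpow' (by norm_num)).const_mul c₂)
  have hpt : ∀ ε ∈ Set.Ioc (0 : ℝ) r, Real.log (coveringNumber
      {v : EuclideanSpace ℝ (Fin d) |
        ((Function.support v).ncard : ℝ) ≤ 9 * s ∧ ‖v‖ ≤ r} ε) ≤ g ε := by
    rintro ε ⟨hε0, hεr⟩
    have hcb := covering_bound hs hsd hε0 hεr
    have hterm : Real.log (3 * r / ε) ≤ 2 * Real.sqrt (3 * r) * ε ^ (-(1/2) : ℝ) := by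
      have h0 : (0 : ℝ) < 3 * r / ε := by positivity
      have hsq : Real.sqrt (3 * r / ε) = Real.sqrt (3 * r) * ε ^ (-(1/2) : ℝ) := by
        rw [show 3 * r / ε = 3 * r * ε⁻¹ by ring,
          Real.sqrt_mul (by positivity) ε⁻¹, Real.sqrt_inv, Real.sqrt_eq_rpow ε,
          ← Real.rpow_neg hε0.le]
      calc Real.log (3 * r / ε) ≤ 2 * Real.sqrt (3 * r / ε) := log_le_two_sqrt h0
        _ = 2 * Real.sqrt (3 * r) * ε ^ (-(1/2) : ℝ) := by rw [hsq]; ring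
    rcases Nat.eq_zero_or_pos (coveringNumber
      {v : EuclideanSpace ℝ (Fin d) |
        ((Function.support v).ncard : ℝ) ≤ 9 * s ∧ ‖v‖ ≤ r} ε) with h0 | hpos
    · rw [h0]
      simp only [Nat.cast_zero, Real.log_zero]
      have h1 : (0 : ℝ) ≤ Real.log (d.choose k) := Real.log_natCast_nonneg _
      have h2 : (0 : ℝ) ≤ c₂ * ε ^ (-(1/2) : ℝ) := by
        have := Real.sqrt_nonneg (3 * r)
        have := Real.rpow_nonneg hε0.le (-(1/2) : ℝ)
        positivity
      simp only [hg]
      linarith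
    · have hchne : ((d.choose k : ℕ) : ℝ) ≠ 0 := by
        exact_mod_cast (Nat.choose_pos hkd).ne'
      have hpowne : ((3 * r / ε) ^ k : ℝ) ≠ 0 := by positivity
      calc Real.log (coveringNumber
            {v : EuclideanSpace ℝ (Fin d) |
              ((Function.support v).ncard : ℝ) ≤ 9 * s ∧ ‖v‖ ≤ r} ε)
          ≤ Real.log ((d.choose k) * (3 * r / ε) ^ k) :=
            Real.log_le_log (by exact_mod_cast hpos) hcb
        _ = Real.log (d.choose k) + (k : ℝ) * Real.log (3 * r / ε) := by
            rw [Real.log_mul hchne hpowne, Real.log_pow]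
        _ ≤ g ε := by
            have h2 := mul_le_mul_of_nonneg_left hterm (Nat.cast_nonneg k : (0:ℝ) ≤ k)
            have h3 : (k : ℝ) * (2 * Real.sqrt (3 * r) * ε ^ (-(1/2) : ℝ))
                = c₂ * ε ^ (-(1/2) : ℝ) := by rw [hc₂]; ring
            simp only [hg]
            linarith
  have hmono : (∫ ε in (0 : ℝ)..r, Real.log (coveringNumber
      {v : EuclideanSpace ℝ (Fin d) |
        ((Function.support v).ncard : ℝ) ≤ 9 * s ∧ ‖v‖ ≤ r} ε))
      ≤ ∫ ε in (0 : ℝ)..r, g ε := by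
    rw [intervalIntegral.integral_of_le hr.le, intervalIntegral.integral_of_le hr.le]
    refine integral_mono_of_nonneg ?_ hgInt.1 ?_
    · exact Filter.Eventually.of_forall fun ε => Real.log_natCast_nonneg _
    · exact (ae_restrict_iff' measurableSet_Ioc).2 (Filter.Eventually.of_forall hpt)
  have hgval : (∫ ε in (0 : ℝ)..r, g ε)
      = r * Real.log (d.choose k) + c₂ * (2 * Real.sqrt r) := by
    rw [hg]
    rw [intervalIntegral.integral_add intervalIntegrable_const
      ((intervalIntegral.intervalIntegrable_rpow' (by norm_num)).const_mul c₂)]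
    rw [intervalIntegral.integral_const, intervalIntegral.integral_const_mul]
    rw [integral_rpow (Or.inl (by norm_num))]
    rw [Real.zero_rpow (by norm_num), show (-(1/2) : ℝ) + 1 = 1/2 by norm_num,
      ← Real.sqrt_eq_rpow]
    simp only [smul_eq_mul, sub_zero]
    ring
  have hsqr : Real.sqrt (3 * r) * Real.sqrt r = Real.sqrt 3 * r := by
    rw [Real.sqrt_mul (by norm_num : (0:ℝ) ≤ 3) r, mul_assoc, Real.mul_self_sqrt hr.le]
  have hsq3 : Real.sqrt 3 ≤ 2 := by
    nlinarith [Real.sq_sqrt (by norm_num : (0:ℝ) ≤ 3), Real.sqrt_nonneg 3]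
  have hfinal : r * Real.log (d.choose k) + c₂ * (2 * Real.sqrt r)
      ≤ 100 * r * (s : ℝ) * L := by
    have h1 : Real.log (d.choose k) ≤ 18 * (s : ℝ) * L := by
      refine hchoose.trans ?_
      have : (k : ℝ) * (1 + L) ≤ (9 * s) * (2 * L) := by
        refine mul_le_mul hk9 (by linarith) (by linarith) (by positivity)
      linarith
    have h2 : c₂ * (2 * Real.sqrt r) = 4 * (k : ℝ) * (Real.sqrt 3 * r) := by
      rw [hc₂, ← hsqr]; ring
    have h3 : 4 * (k : ℝ) * (Real.sqrt 3 * r) ≤ 72 * (s : ℝ) * r := by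
      have hrs3 : Real.sqrt 3 * r ≤ 2 * r := by nlinarith [Real.sqrt_nonneg 3]
      nlinarith [Real.sqrt_nonneg 3, (Nat.cast_nonneg k : (0:ℝ) ≤ (k:ℝ))]
    have h4 : (72 : ℝ) * s * r ≤ 72 * s * r * L := by
      nlinarith [mul_nonneg (by positivity : (0:ℝ) ≤ 72 * (s:ℝ) * r)
        (by linarith : (0:ℝ) ≤ L - 1)]
    have h5 : r * Real.log (d.choose k) ≤ r * (18 * s * L) :=
      mul_le_mul_of_nonneg_left h1 hr.le
    nlinarith
  calc _ ≤ ∫ ε in (0 : ℝ)..r, g ε := hmono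
    _ = r * Real.log (d.choose k) + c₂ * (2 * Real.sqrt r) := hgval
    _ ≤ 100 * r * (s : ℝ) * L := hfinal
end
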